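/- Let G be a weak framework for a matroid M. If F is a forest of G (a subgraph with no cycles and no loop-edges), then E(F) is an independent set of M. -/

import Mathlib

open Set Matroid
open scoped Classical

namespace QuasiGraphicPaper

universe u v

/-- A finite multigraph: a set `V` of vertices (in an ambient type `α`), a set `E` of
edges (in an ambient type `β`), and an incidence function assigning to each edge an
unordered pair of endpoints; loop-edges and parallel edges are allowed. -/
structure Graph (α : Type u) (β : Type v) where
  V : Set α
  E : Set β
  ends : β → Sym2 α
  finV : V.Finite
  finE : E.Finite
  ends_mem : ∀ ⦃e⦄, e ∈ E → ∀ ⦃x⦄, x ∈ ends e → x ∈ V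

namespace Graph

variable {α : Type u} {β : Type v}

/-- `e` is a loop-edge of `G` at the vertex `v`. -/
def IsLoopAt (G : Graph α β) (e : β) (v : α) : Prop :=
  e ∈ G.E ∧ G.ends e = Sym2.diag v

/-- `loops_G(v)`: the set of loop-edges of `G` at `v`. -/
def loopsAt (G : Graph α β) (v : α) : Set β := {e | G.IsLoopAt e v}

/-- Two vertices are adjacent if some edge of `G` has them as its two endpoints. -/
def Adj (G : Graph α β) (u v : α) : Prop := ∃ e ∈ G.E, G.ends e = s(u, v)

/-- A graph is connected if any two of its vertices are joined by a walk.
(The graph with no vertices is connected.) -/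
def Connected (G : Graph α β) : Prop :=
  ∀ u ∈ G.V, ∀ v ∈ G.V, Relation.ReflTransGen G.Adj u v

/-- Delete a set `X` of vertices: remove the vertices in `X` and all edges meeting `X`. -/
def deleteVertices (G : Graph α β) (X : Set α) : Graph α β where
  V := G.V \ X
  E := {e ∈ G.E | ∀ x ∈ G.ends e, x ∉ X}
  ends := G.ends
  finV := G.finV.sdiff (t := X)
  finE := G.finE.subset (sep_subset _ _)
  ends_mem := fun e he x hx => ⟨G.ends_mem he.1 hx, he.2 x hx⟩

/-- `G − v`: delete the single vertex `v`. -/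
abbrev deleteVertex (G : Graph α β) (v : α) : Graph α β := G.deleteVertices {v}

/-- `G − e`: delete the edge `e` (keeping all vertices). -/
def deleteEdge (G : Graph α β) (e : β) : Graph α β where
  V := G.V
  E := G.E \ {e}
  ends := G.ends
  finV := G.finV
  finE := G.finE.sdiff
  ends_mem := fun f hf x hx => G.ends_mem hf.1 hx

/-- `G[X]`: the subgraph of `G` with edge set `X` (intersected with `E(G)`) and
no isolated vertices. -/
def restrictEdges (G : Graph α β) (X : Set β) : Graph α β where
  V := {v | ∃ e ∈ X ∩ G.E, v ∈ G.ends e}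
  E := X ∩ G.E
  ends := G.ends
  finV := G.finV.subset (by rintro v ⟨e, ⟨-, he⟩, hv⟩; exact G.ends_mem he hv)
  finE := G.finE.subset inter_subset_right
  ends_mem := fun e he x hx => ⟨e, he, hx⟩

/-- The connected component of `G` containing the vertex `v`, as a graph. -/
def componentOf (G : Graph α β) (v : α) : Graph α β where
  V := {u ∈ G.V | Relation.ReflTransGen G.Adj v u}
  E := {e ∈ G.E | ∀ x ∈ G.ends e, Relation.ReflTransGen G.Adj v x}
  ends := G.ends
  finV := G.finV.subset (sep_subset _ _)
  finE := G.finE.subset (sep_subset _ _)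
  ends_mem := fun e he x hx => ⟨G.ends_mem he.1 hx, he.2 x hx⟩

/-- `H` is a connected component of `G`. -/
def IsComponentOf (H G : Graph α β) : Prop := ∃ v ∈ G.V, H = G.componentOf v

/-- The number of connected components of `G`. -/
noncomputable def ncomponents (G : Graph α β) : ℕ :=
  {H : Graph α β | H.IsComponentOf G}.ncard

/-- `G` has at most two connected components: among any three vertices, two are joined. -/
def AtMostTwoComponents (G : Graph α β) : Prop :=
  ∀ u ∈ G.V, ∀ v ∈ G.V, ∀ w ∈ G.V,
    Relation.ReflTransGen G.Adj u v ∨ Relation.ReflTransGen G.Adj u w ∨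
      Relation.ReflTransGen G.Adj v w

/-- The degree of a vertex: loop-edges count twice. -/
noncomputable def degree (G : Graph α β) (v : α) : ℕ :=
  ({e ∈ G.E | v ∈ G.ends e ∧ ¬ (G.ends e).IsDiag}).ncard +
    2 * ({e ∈ G.E | G.ends e = Sym2.diag v}).ncard

/-- `G` is a cycle: it is connected, has at least one edge, and every vertex has
degree two. -/
def IsCycleGraph (G : Graph α β) : Prop :=
  G.E.Nonempty ∧ G.Connected ∧ ∀ v ∈ G.V, G.degree v = 2

/-- `C` is (the edge set of) a cycle of `G`. -/
def CycleSet (G : Graph α β) (C : Set β) : Prop :=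
  C ⊆ G.E ∧ (G.restrictEdges C).IsCycleGraph

/-- A forest: a graph with no cycles (in particular no loop-edges). -/
def IsForest (G : Graph α β) : Prop := ∀ C, ¬ G.CycleSet C

/-- `H` is a subgraph of `G`. -/
def IsSubgraph (H G : Graph α β) : Prop := H.V ⊆ G.V ∧ H.E ⊆ G.E ∧ H.ends = G.ends

/-- `G` is `k`-connected if `G − X` is connected for every vertex set `X` with `|X| < k`. -/
def KConnected (G : Graph α β) (k : ℕ) : Prop :=
  ∀ X : Set α, X.encard < k → (G.deleteVertices X).Connected

/-- A theta: a `2`-connected graph with exactly two vertices of degree three, all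
other vertices having degree two. -/
def IsTheta (H : Graph α β) : Prop :=
  H.KConnected 2 ∧
    ∃ a ∈ H.V, ∃ b ∈ H.V, a ≠ b ∧ H.degree a = 3 ∧ H.degree b = 3 ∧
      ∀ v ∈ H.V, v ≠ a → v ≠ b → H.degree v = 2

/-- `G / e`: contract the non-loop edge `e` with endpoints `x` and `y`
(identifying `y` with `x` and deleting `e`). -/
noncomputable def contractEdge (G : Graph α β) (e : β) (x y : α) (he : e ∈ G.E)
    (hxy : G.ends e = s(x, y)) (hne : x ≠ y) : Graph α β where
  V := G.V \ {y}
  E := G.E \ {e}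
  ends := fun f => (G.ends f).map (fun w => if w = y then x else w)
  finV := G.finV.sdiff
  finE := G.finE.sdiff
  ends_mem := by
    rintro f ⟨hf, -⟩ z hz
    rw [Sym2.mem_map] at hz
    obtain ⟨w, hw, rfl⟩ := hz
    by_cases hwy : w = y
    · rw [if_pos hwy]
      have hx : x ∈ G.ends e := by rw [hxy]; exact Sym2.mem_mk_left x y
      exact ⟨G.ends_mem he hx, by simp [hne]⟩
    · rw [if_neg hwy]
      exact ⟨G.ends_mem hf hw, by simp [hwy]⟩

/-- `G ∘ e`: for a loop-edge `e` at a vertex `v` which is the unique loop-edge at `v`,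
delete `v` and `e`, and replace every other edge `f = vw` at `v` by a loop-edge at `w`. -/
noncomputable def circ (G : Graph α β) (e : β) (v : α)
    (hno : ∀ f ∈ G.E, G.ends f = Sym2.diag v → f = e) : Graph α β where
  V := G.V \ {v}
  E := G.E \ {e}
  ends := fun f =>
    if h : f ∈ G.E ∧ f ≠ e ∧ v ∈ G.ends f then Sym2.diag (Sym2.Mem.other h.2.2)
    else G.ends f
  finV := G.finV.sdiff
  finE := G.finE.sdiff
  ends_mem := by
    rintro f ⟨hf, hfe⟩ z hz
    have hfe' : f ≠ e := fun h' => hfe (by simp [h'])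
    by_cases h : f ∈ G.E ∧ f ≠ e ∧ v ∈ G.ends f
    · rw [dif_pos h] at hz
      have hze : z = Sym2.Mem.other h.2.2 := by
        have h2 : z ∈ s(Sym2.Mem.other h.2.2, Sym2.Mem.other h.2.2) := hz
        rw [Sym2.mem_iff] at h2
        tauto
      subst hze
      refine ⟨G.ends_mem hf (Sym2.other_mem h.2.2), ?_⟩
      simp only [mem_singleton_iff]
      intro hzv
      apply h.2.1
      apply hno f hf
      show G.ends f = s(v, v)
      rw [← Sym2.other_spec h.2.2, hzv]
    · rw [dif_neg h] at hz
      refine ⟨G.ends_mem hf hz, ?_⟩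
      simp only [mem_singleton_iff]
      intro hzv
      subst hzv
      exact h ⟨hf, hfe', hz⟩

end Graph

/-! ### Matroid notions -/

variable {α : Type u} {β : Type v}

/-- The rank `r_M(X)` of a set `X` in a matroid `M`: the maximum size of an
independent subset of `X`. -/
noncomputable def rank (M : Matroid β) (X : Set β) : ℕ :=
  (⨆ I ∈ {I : Set β | M.Indep I ∧ I ⊆ X}, I.encard).toNat

/-- `C` is a circuit of `M` : a minimal dependent set. -/
def IsCircuit (M : Matroid β) (C : Set β) : Prop :=
  M.Dep C ∧ ∀ D, D ⊂ C → M.Indep D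

/-- `M \ D` : delete the set `D` from the matroid `M`. -/
def deleteM (M : Matroid β) (D : Set β) : Matroid β := M ↾ (M.E \ D)

/-- `M / C` : contract the set `C` in the matroid `M`. -/
def contractM (M : Matroid β) (C : Set β) : Matroid β := (M✶ ↾ (M✶.E \ C))✶

/-- `G` is a weak framework for `M`: conditions (1)–(3). -/
def WeakFramework (G : Graph α β) (M : Matroid β) : Prop :=
  G.E = M.E ∧
  (∀ H : Graph α β, H.IsComponentOf G → rank M H.E ≤ H.V.ncard) ∧
  (∀ v ∈ G.V,
    M.closure (G.deleteVertex v).E ⊆ (G.deleteVertex v).E ∪ G.loopsAt v)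

/-- `G` is a framework for `M`: conditions (1)–(4). -/
def Framework (G : Graph α β) (M : Matroid β) : Prop :=
  WeakFramework G M ∧
    ∀ C, IsCircuit M C → (G.restrictEdges C).AtMostTwoComponents

/-- `M` is the cycle matroid `M(G)` of `G` : the ground set of `M` is `E(G)`, and the
circuits of `M` are exactly the edge sets of cycles of `G`. -/
def IsCycleMatroidOf (G : Graph α β) (M : Matroid β) : Prop :=
  M.E = G.E ∧ ∀ C, IsCircuit M C ↔ G.CycleSet C

/-- A matroid is graphic if it is the cycle matroid of some graph. -/
def Graphic (M : Matroid β) : Prop :=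
  ∃ (γ : Type v) (G : Graph γ β), IsCycleMatroidOf G M

/-- A matroid is quasi-graphic if it has a framework. -/
def QuasiGraphic (M : Matroid β) : Prop :=
  ∃ (γ : Type v) (G : Graph γ β), Framework G M

/-- `M` is a lift of `N` if some single-element extension `M'` of `M` satisfies
`M' \ e = M` and `M' / e = N`. -/
def IsLiftOf (M N : Matroid β) : Prop :=
  ∃ M' : Matroid (Option β), (none : Option β) ∈ M'.E ∧
    deleteM M' {none} = M.map some (Option.some_injective β).injOn ∧
    contractM M' {none} = N.map some (Option.some_injective β).injOn

/-- `M` is a lifted-graphic matroid: for some single-element extension `M'` of `M`,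
`M' / e` is graphic. -/
def LiftedGraphic (M : Matroid β) : Prop :=
  ∃ M' : Matroid (Option β), (none : Option β) ∈ M'.E ∧
    deleteM M' {none} = M.map some (Option.some_injective β).injOn ∧
    Graphic (contractM M' {none})

/-- `(M, V)` is a framed matroid: `V` is a basis of `M` and every element of `M` is
spanned by a subset of `V` with at most two elements. -/
def FramedMatroid {γ : Type u} (M : Matroid γ) (V : Set γ) : Prop :=
  M.IsBase V ∧ ∀ e ∈ M.E, ∃ S ⊆ V, S.ncard ≤ 2 ∧ e ∈ M.closure S

/-- `M` is a frame matroid: `M = M' \ V` for some framed matroid `(M', V)`. -/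
def FrameMatroid (M : Matroid β) : Prop :=
  ∃ (γ : Type v) (M' : Matroid (β ⊕ γ)) (V : Set (β ⊕ γ)),
    FramedMatroid M' V ∧
      deleteM M' V = M.map Sum.inl Sum.inl_injective.injOn

/-- `M` is `3`-connected: it has no `k`-separation for `k ≤ 2`. -/
def ThreeConnected (M : Matroid β) : Prop :=
  ∀ X ⊆ M.E, ∀ k : ℕ, k ≤ 2 → (k : ℕ∞) ≤ X.encard → (k : ℕ∞) ≤ (M.E \ X).encard →
    rank M M.E + k ≤ rank M X + rank M (M.E \ X)

/-- `M` is representable over some field. -/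
def Representable (M : Matroid β) : Prop :=
  ∃ (F : Type v) (_ : Field F) (W : Type v) (_ : AddCommGroup W) (_ : Module F W)
    (φ : β → W), ∀ I ⊆ M.E, (M.Indep I ↔ LinearIndependent F (fun x : I => φ x))

/-- A collection `B` of cycles of `G` satisfies the theta-property if there is no
theta-subgraph of `G` with exactly two of its three cycles in `B`. -/
def ThetaProperty (G : Graph α β) (B : Set (Set β)) : Prop :=
  ∀ H : Graph α β, H.IsSubgraph G → H.IsTheta →
    ∀ C1 C2 C3, H.CycleSet C1 → H.CycleSet C2 → H.CycleSet C3 →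
      C1 ≠ C2 → C2 ≠ C3 → C1 ≠ C3 → C1 ∈ B → C2 ∈ B → C3 ∈ B


/-! ### Auxiliary lemmas for Statement 8 -/

section Statement8Aux

open Relation

/-- In a loopless graph, the ends of every edge are a non-diagonal pair. -/
lemma ends_not_isDiag (F : Graph α β) (hnl : ∀ e v, ¬ F.IsLoopAt e v) {e : β}
    (he : e ∈ F.E) : ¬ (F.ends e).IsDiag := fun hd => by
  obtain ⟨w, hw⟩ : ∃ w, Sym2.diag w = F.ends e := by
    revert hd; generalize F.ends e = z
    induction z using Sym2.ind with
    | h a b => intro hd; exact ⟨a, by rw [Sym2.mk_isDiag_iff.mp hd]; rfl⟩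
  exact hnl e w ⟨he, hw.symm⟩

/-- A path (with distinct vertices) of `n` edges, all belonging to `C`, in `F`. -/
def IsPathOf (F : Graph α β) (C : Set β) (n : ℕ) (v : ℕ → α) (e : ℕ → β) : Prop :=
  (∀ i ≤ n, ∀ k ≤ n, v i = v k → i = k) ∧
  ∀ i < n, e i ∈ C ∧ F.ends (e i) = s(v i, v (i + 1))

lemma IsPathOf.le_ncard {F : Graph α β} {C : Set β} {n : ℕ} {v : ℕ → α} {e : ℕ → β}
    (h : IsPathOf F C n v e) (hC : C ⊆ F.E) (hn : 1 ≤ n) :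
    n + 1 ≤ F.V.ncard := by
  classical
  have hmem : ∀ i ≤ n, v i ∈ F.V := by
    intro i hi
    rcases Nat.lt_or_ge i n with h' | h'
    · have he := h.2 i h'
      exact F.ends_mem (hC he.1) (by rw [he.2]; exact Sym2.mem_mk_left _ _)
    · have hin : i = n := le_antisymm hi h'
      have he := h.2 (n - 1) (by omega)
      have hsucc : n - 1 + 1 = n := by omega
      refine F.ends_mem (hC he.1) ?_
      rw [he.2, hsucc, hin]
      exact Sym2.mem_mk_right _ _
  have hinj : Function.Injective (fun i : Fin (n + 1) => v i) := by
    intro i k hik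
    exact Fin.ext (h.1 i (by omega) k (by omega) hik)
  have hcard : (Finset.image (fun i : Fin (n + 1) => v i) Finset.univ).card = n + 1 := by
    rw [Finset.card_image_of_injective _ hinj, Finset.card_univ, Fintype.card_fin]
  have hsub : (Finset.image (fun i : Fin (n + 1) => v i) Finset.univ) ⊆ F.finV.toFinset := by
    intro x hx
    simp only [Finset.mem_image, Finset.mem_univ, true_and] at hx
    obtain ⟨i, rfl⟩ := hx
    exact F.finV.mem_toFinset.mpr (hmem i (by omega))
  calc n + 1 = _ := hcard.symm
    _ ≤ F.finV.toFinset.card := Finset.card_le_card hsub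
    _ = F.V.ncard := (Set.ncard_eq_toFinset_card F.V F.finV).symm

/-- If every incidence of `C` has a companion, then `F` contains a cycle. -/
lemma exists_cycleSet (F : Graph α β) (C : Set β) (hC : C ⊆ F.E) (hne : C.Nonempty)
    (hnl : ∀ e v, ¬ F.IsLoopAt e v)
    (hdeg : ∀ u e, e ∈ C → u ∈ F.ends e → ∃ f ∈ C, f ≠ e ∧ u ∈ F.ends f) :
    ∃ D, F.CycleSet D := by
  classical
  have hnd : ∀ e ∈ C, ¬ (F.ends e).IsDiag := fun e he => ends_not_isDiag F hnl (hC he)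
  -- from a membership, get the other (distinct) endpoint
  have hother : ∀ e ∈ C, ∀ u, (h : u ∈ F.ends e) → ∃ w, w ≠ u ∧ F.ends e = s(u, w) := by
    intro e he u h
    refine ⟨Sym2.Mem.other h, fun hw => ?_, (Sym2.other_spec h).symm⟩
    have := Sym2.other_spec h
    rw [hw] at this
    exact hnd e he (this ▸ Sym2.mk_isDiag_iff.mpr rfl)
  set P : ℕ → Prop := fun n => ∃ v e, IsPathOf F C n v e with hP
  set b : ℕ := F.V.ncard + 1 with hb
  have hbound : ∀ k, P k → k ≤ F.V.ncard := by
    rintro k ⟨v, e, hpath⟩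
    rcases Nat.eq_zero_or_pos k with rfl | hk
    · omega
    · have := hpath.le_ncard hC hk; omega
  have hP1 : P 1 := by
    obtain ⟨g, hg⟩ := hne
    have hgmem : ∃ u, u ∈ F.ends g := ⟨(F.ends g).out.1, Sym2.out_fst_mem _⟩
    obtain ⟨u, hu⟩ := hgmem
    obtain ⟨w, hwu, hgw⟩ := hother g hg u hu
    refine ⟨fun i => if i = 0 then u else w, fun _ => g, ?_, ?_⟩
    · intro i hi k hk hik
      interval_cases i <;> interval_cases k <;> simp_all
    · intro i hi
      interval_cases i
      simpa using ⟨hg, hgw⟩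
  set N : ℕ := Nat.findGreatest P b with hN
  have hPN : P N := Nat.findGreatest_spec (m := 1) (by omega) hP1
  have hN1 : 1 ≤ N := Nat.le_findGreatest (by omega) hP1
  have hmax : ¬ P (N + 1) := by
    intro hPn
    have h1 : N + 1 ≤ F.V.ncard := hbound _ hPn
    exact Nat.findGreatest_is_greatest (P := P) (n := b) (by omega) (by omega) hPn
  obtain ⟨v, e, hinj, hedge⟩ := hPN
  -- the last edge of the path, incident to `v N`
  have hlast : e (N - 1) ∈ C ∧ F.ends (e (N - 1)) = s(v (N - 1), v N) := by
    have := hedge (N - 1) (by omega)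
    rwa [show N - 1 + 1 = N by omega] at this
  have hvN : v N ∈ F.ends (e (N - 1)) := by
    rw [hlast.2]; exact Sym2.mem_mk_right _ _
  obtain ⟨f, hfC, hfne, hvf⟩ := hdeg (v N) (e (N - 1)) hlast.1 hvN
  obtain ⟨w, hwv, hfw⟩ := hother f hfC (v N) hvf
  by_cases hwin : ∃ j ≤ N, v j = w
  · -- `w` closes a cycle
    obtain ⟨j, hjN, hjw⟩ := hwin
    have hjne : j ≠ N := fun hj => hwv (hj ▸ hjw).symm
    have hjlt : j < N := lt_of_le_of_ne hjN hjne
    rw [← hjw] at hfw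
    -- the edge set of the cycle
    set D : Set β := insert f (e '' {m | j ≤ m ∧ m < N}) with hD
    have hDC : D ⊆ C := by
      rintro g (rfl | ⟨m, ⟨hm1, hm2⟩, rfl⟩)
      · exact hfC
      · exact (hedge m hm2).1
    have hDE : D ⊆ F.E := hDC.trans hC
    set R : Graph α β := F.restrictEdges D with hR
    have hRends : R.ends = F.ends := rfl
    have hRE : R.E = D ∩ F.E := rfl
    have hRE' : R.E = D := by rw [hRE, Set.inter_eq_left]; exact hDE
    -- membership characterizations
    have hmemf : ∀ i ≤ N, (v i ∈ F.ends f ↔ i = N ∨ i = j) := by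
      intro i hi
      rw [hfw, Sym2.mem_iff]
      constructor
      · rintro (h | h)
        · exact Or.inl (hinj i hi N le_rfl h)
        · exact Or.inr (hinj i hi j (by omega) h)
      · rintro (rfl | rfl)
        · exact Or.inl rfl
        · exact Or.inr rfl
    have hmeme : ∀ i ≤ N, ∀ m, m < N → (v i ∈ F.ends (e m) ↔ i = m ∨ i = m + 1) := by
      intro i hi m hm
      rw [(hedge m hm).2, Sym2.mem_iff]
      constructor
      · rintro (h | h)
        · exact Or.inl (hinj i hi m (by omega) h)
        · exact Or.inr (hinj i hi (m + 1) (by omega) h)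
      · rintro (rfl | rfl)
        · exact Or.inl rfl
        · exact Or.inr rfl
    have hfnee : ∀ m, j ≤ m → m < N → f ≠ e m := by
      intro m hm1 hm2 hfe
      have h1 : v N ∈ F.ends (e m) := by rw [← hfe, hfw]; exact Sym2.mem_mk_left _ _
      have h2 : v j ∈ F.ends (e m) := by rw [← hfe, hfw]; exact Sym2.mem_mk_right _ _
      rw [hmeme N le_rfl m hm2] at h1
      rw [hmeme j (by omega) m hm2] at h2
      have hmN : m = N - 1 := by omega
      exact hfne (by rw [hfe, hmN])
    have heinj : ∀ m, m < N → ∀ m', m' < N → e m = e m' → m = m' := by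
      intro m hm m' hm' hee
      have h1 : v m ∈ F.ends (e m') := by
        rw [← hee, (hedge m hm).2]; exact Sym2.mem_mk_left _ _
      have h2 : v (m + 1) ∈ F.ends (e m') := by
        rw [← hee, (hedge m hm).2]; exact Sym2.mem_mk_right _ _
      rw [hmeme m (by omega) m' hm'] at h1
      rw [hmeme (m + 1) (by omega) m' hm'] at h2
      omega
    -- vertices of the cycle
    have hVchar : ∀ u ∈ R.V, ∃ i, j ≤ i ∧ i ≤ N ∧ u = v i := by
      rintro u ⟨g, hgD, hgu⟩
      rcases hgD.1 with rfl | ⟨m, ⟨hm1, hm2⟩, rfl⟩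
      · rw [hfw, Sym2.mem_iff] at hgu
        rcases hgu with rfl | rfl
        · exact ⟨N, by omega, le_rfl, rfl⟩
        · exact ⟨j, le_rfl, by omega, rfl⟩
      · rw [(hedge m hm2).2, Sym2.mem_iff] at hgu
        rcases hgu with rfl | rfl
        · exact ⟨m, hm1, by omega, rfl⟩
        · exact ⟨m + 1, by omega, by omega, rfl⟩
    have hfD : f ∈ D := Set.mem_insert _ _
    have heD : ∀ m, j ≤ m → m < N → e m ∈ D :=
      fun m hm1 hm2 => Set.mem_insert_of_mem _ ⟨m, ⟨hm1, hm2⟩, rfl⟩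
    -- adjacency and connectivity
    have hstep : ∀ m, j ≤ m → m < N → R.Adj (v m) (v (m + 1)) := by
      intro m hm1 hm2
      exact ⟨e m, ⟨heD m hm1 hm2, hC (hedge m hm2).1⟩, (hedge m hm2).2⟩
    have hAdjsymm : Symmetric R.Adj := by
      rintro a b ⟨g, hg, hgend⟩
      exact ⟨g, hg, by rw [hgend]; exact Sym2.eq_swap⟩
    have hreach : ∀ i, i ≤ N → j ≤ i → Relation.ReflTransGen R.Adj (v j) (v i) := by
      intro i
      induction i with
      | zero => intro _ hj; have : j = 0 := by omega
                rw [this]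
      | succ i ih =>
        intro hi hj
        rcases Nat.lt_or_ge j (i + 1) with hj' | hj'
        · exact (ih (by omega) (by omega)).tail (hstep i (by omega) (by omega))
        · have : j = i + 1 := by omega
          rw [this]
    refine ⟨D, hDE, ⟨f, by rw [hRE']; exact hfD⟩, ?_, ?_⟩
    · -- connectivity
      intro u hu u' hu'
      obtain ⟨i, hi1, hi2, rfl⟩ := hVchar u hu
      obtain ⟨i', hi'1, hi'2, rfl⟩ := hVchar u' hu'
      haveI : Std.Symm R.Adj := ⟨fun a b h => hAdjsymm h⟩
      exact (Std.Symm.symm (self := Relation.ReflTransGen.symmetric) _ _ (hreach i hi2 hi1)).trans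
        (hreach i' hi'2 hi'1)
    · -- degrees
      intro u hu
      obtain ⟨i, hi1, hi2, rfl⟩ := hVchar u hu
      have hloopset : {g ∈ R.E | R.ends g = Sym2.diag (v i)} = ∅ := by
        ext g
        simp only [Set.mem_setOf_eq, Set.mem_empty_iff_false, iff_false, not_and]
        intro hg hdiag
        rw [hRE'] at hg
        refine hnd g (hDC hg) ?_
        show (F.ends g).IsDiag
        rw [show F.ends g = Sym2.diag (v i) from hdiag]
        exact Sym2.diag_isDiag _
      have hset : {g ∈ R.E | v i ∈ R.ends g ∧ ¬ (R.ends g).IsDiag} = {g ∈ D | v i ∈ F.ends g} := by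
        ext g
        simp only [Set.mem_setOf_eq, hRends, hRE']
        constructor
        · rintro ⟨hg, hgu, -⟩; exact ⟨hg, hgu⟩
        · rintro ⟨hg, hgu⟩; exact ⟨hg, hgu, hnd g (hDC hg)⟩
      have hpair : ∃ g1 g2, g1 ≠ g2 ∧ {g ∈ D | v i ∈ F.ends g} = {g1, g2} := by
        by_cases hij : i = j
        · -- bottom vertex: edges f and e j
          refine ⟨f, e j, hfnee j le_rfl hjlt, ?_⟩
          ext g
          simp only [Set.mem_setOf_eq, Set.mem_insert_iff, Set.mem_singleton_iff]
          constructor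
          · rintro ⟨(rfl | ⟨m, ⟨hm1, hm2⟩, rfl⟩), hgu⟩
            · exact Or.inl rfl
            · rw [hmeme i hi2 m hm2] at hgu
              have : m = j := by omega
              exact Or.inr (by rw [this])
          · rintro (rfl | rfl)
            · exact ⟨hfD, (hmemf i hi2).mpr (Or.inr hij)⟩
            · exact ⟨heD j le_rfl hjlt, (hmeme i hi2 j hjlt).mpr (Or.inl hij)⟩
        by_cases hiN : i = N
        · -- top vertex: edges f and e (N - 1)
          refine ⟨f, e (N - 1), hfnee (N - 1) (by omega) (by omega), ?_⟩
          ext g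
          simp only [Set.mem_setOf_eq, Set.mem_insert_iff, Set.mem_singleton_iff]
          constructor
          · rintro ⟨(rfl | ⟨m, ⟨hm1, hm2⟩, rfl⟩), hgu⟩
            · exact Or.inl rfl
            · rw [hmeme i hi2 m hm2] at hgu
              have : m = N - 1 := by omega
              exact Or.inr (by rw [this])
          · rintro (rfl | rfl)
            · exact ⟨hfD, (hmemf i hi2).mpr (Or.inl hiN)⟩
            · exact ⟨heD (N - 1) (by omega) (by omega),
                (hmeme i hi2 (N - 1) (by omega)).mpr (Or.inr (by omega))⟩
        · -- middle vertex: edges e (i - 1) and e i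
          have hji : j < i := lt_of_le_of_ne hi1 (Ne.symm hij)
          have hiltN : i < N := lt_of_le_of_ne hi2 hiN
          refine ⟨e (i - 1), e i, fun hee => by
            have := heinj (i - 1) (by omega) i (by omega) hee; omega, ?_⟩
          ext g
          simp only [Set.mem_setOf_eq, Set.mem_insert_iff, Set.mem_singleton_iff]
          constructor
          · rintro ⟨(rfl | ⟨m, ⟨hm1, hm2⟩, rfl⟩), hgu⟩
            · rw [hmemf i hi2] at hgu
              omega
            · rw [hmeme i hi2 m hm2] at hgu
              rcases hgu with rfl | h
              · exact Or.inr rfl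
              · exact Or.inl (by rw [show i - 1 = m by omega])
          · rintro (rfl | rfl)
            · exact ⟨heD (i - 1) (by omega) (by omega),
                (hmeme i hi2 (i - 1) (by omega)).mpr (Or.inr (by omega))⟩
            · exact ⟨heD i (by omega) hiltN,
                (hmeme i hi2 i hiltN).mpr (Or.inl rfl)⟩
      obtain ⟨g1, g2, hg12, hpeq⟩ := hpair
      show ({g ∈ R.E | v i ∈ R.ends g ∧ ¬ (R.ends g).IsDiag}).ncard +
        2 * ({g ∈ R.E | R.ends g = Sym2.diag (v i)}).ncard = 2
      rw [hset, hpeq, hloopset, Set.ncard_pair hg12, Set.ncard_empty]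
  · -- extend the path, contradicting maximality
    exfalso
    apply hmax
    refine ⟨Function.update v (N + 1) w, Function.update e N f, ?_, ?_⟩
    · intro i hi k hk hik
      rcases Nat.lt_or_ge i (N + 1) with hi' | hi' <;>
        rcases Nat.lt_or_ge k (N + 1) with hk' | hk'
      · rw [Function.update_of_ne (by omega), Function.update_of_ne (by omega)] at hik
        exact hinj i (by omega) k (by omega) hik
      · exfalso
        have hkN : k = N + 1 := by omega
        rw [hkN, Function.update_of_ne (by omega), Function.update_self] at hik
        exact hwin ⟨i, by omega, hik⟩
      · exfalso
        have hiN : i = N + 1 := by omega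
        rw [hiN, Function.update_self, Function.update_of_ne (by omega)] at hik
        exact hwin ⟨k, by omega, hik.symm⟩
      · omega
    · intro i hi
      rcases Nat.lt_or_ge i N with hi' | hi'
      · rw [Function.update_of_ne (by omega), Function.update_of_ne (by omega),
          Function.update_of_ne (by omega)]
        exact hedge i hi'
      · have hiN : i = N := by omega
        subst hiN
        rw [Function.update_self, Function.update_of_ne (by omega), Function.update_self]
        exact ⟨hfC, hfw⟩

end Statement8Aux

/-- Let `G` be a weak framework for a matroid `M`. If `F` is a forest of
`G` (a subgraph with no cycles and no loop-edges), then `E(F)` is an independent set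
of `M`. -/
theorem statement8 {α : Type u} {β : Type v} (G F : Graph α β) (M : Matroid β)
    (h : WeakFramework G M) (hsub : F.IsSubgraph G) (hforest : F.IsForest)
    (hnoloop : ∀ e v, ¬ F.IsLoopAt e v) :
    M.Indep F.E := by
  classical
  by_contra hind
  have hendsFG : F.ends = G.ends := hsub.2.2
  have hFG : F.E ⊆ G.E := hsub.2.1
  have hFE : F.E ⊆ M.E := h.1 ▸ hFG
  -- a minimal dependent subset `C` of `F.E`
  set T : Finset (Finset β) :=
    (F.finE.toFinset.powerset).filter (fun s => ¬ M.Indep (s : Set β)) with hT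
  have hTne : F.finE.toFinset ∈ T := by
    rw [hT, Finset.mem_filter]
    exact ⟨Finset.mem_powerset_self _, by rwa [F.finE.coe_toFinset]⟩
  obtain ⟨C0, hC0T, hmin⟩ := T.exists_min_image Finset.card ⟨_, hTne⟩
  rw [hT, Finset.mem_filter, Finset.mem_powerset] at hC0T
  set C : Set β := (C0 : Set β) with hCdef
  have hCF : C ⊆ F.E := by
    rw [hCdef, ← F.finE.coe_toFinset]
    exact_mod_cast hC0T.1
  have hCdep : ¬ M.Indep C := hC0T.2
  have hCne : C.Nonempty := by
    rcases C.eq_empty_or_nonempty with hc | hc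
    · exact absurd (hc ▸ M.empty_indep) hCdep
    · exact hc
  have hminimal : ∀ D, D ⊂ C → M.Indep D := by
    intro D hD
    by_contra hDdep
    have hDfin : D.Finite := F.finE.subset (hD.subset.trans hCF)
    have hDT : hDfin.toFinset ∈ T := by
      rw [hT, Finset.mem_filter, Finset.mem_powerset]
      constructor
      · rw [← Finset.coe_subset, hDfin.coe_toFinset, F.finE.coe_toFinset]
        exact hD.subset.trans hCF
      · rwa [hDfin.coe_toFinset]
    have hlt : hDfin.toFinset.card < C0.card := by
      apply Finset.card_lt_card
      rw [← Finset.coe_ssubset, hDfin.coe_toFinset]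
      exact hD
    exact absurd (hmin _ hDT) (by omega)
  have hcl : ∀ x ∈ C, x ∈ M.closure (C \ {x}) := by
    intro x hx
    have hI : M.Indep (C \ {x}) := hminimal _ (Set.sdiff_singleton_ssubset.mpr hx)
    by_contra hx2
    have : M.Indep (insert x (C \ {x})) := by
      rw [hI.insert_indep_iff_of_notMem (by simp)]
      exact ⟨hFE (hCF hx), hx2⟩
    rw [Set.insert_diff_singleton, Set.insert_eq_of_mem hx] at this
    exact hCdep this
  -- `F[C]` has a leaf incidence, else `F` has a cycle
  have hleaf : ∃ x ∈ C, ∃ u ∈ F.ends x, ∀ f ∈ C, u ∈ F.ends f → f = x := by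
    by_contra hno
    push_neg at hno
    obtain ⟨D, hD⟩ := exists_cycleSet F C hCF hCne hnoloop (by
      intro u x hxC hu
      obtain ⟨f, hfC, hfu, hfx⟩ := hno x hxC u hu
      exact ⟨f, hfC, hfx, hfu⟩)
    exact hforest D hD
  obtain ⟨x, hxC, u, hu, huniq⟩ := hleaf
  have huG : u ∈ G.ends x := by rw [← hendsFG]; exact hu
  have hvG : u ∈ G.V := G.ends_mem (hFG (hCF hxC)) huG
  have hsubset : C \ {x} ⊆ (G.deleteVertex u).E := by
    rintro g ⟨hgC, hgx⟩
    refine ⟨hFG (hCF hgC), ?_⟩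
    intro z hz hzu
    rw [Set.mem_singleton_iff] at hzu
    subst hzu
    rw [← hendsFG] at hz
    exact hgx (huniq g hgC hz)
  have hxcl : x ∈ M.closure ((G.deleteVertex u).E) :=
    M.closure_subset_closure hsubset (hcl x hxC)
  rcases h.2.2 u hvG hxcl with hmem | hloop
  · exact hmem.2 u huG rfl
  · exact hnoloop x u ⟨hCF hxC, hendsFG ▸ hloop.2⟩

end QuasiGraphicPaper
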